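/- In U_q(gl(m,n)), for indices i < s < t < j one has [E_{i,j}, E_{s,t}] = 0 and [F_{i,j}, F_{s,t}] = 0, where [x,y] = xy - (-1)^{x̄ȳ}yx is the super-commutator. -/
import Mathlib


noncomputable section

namespace QGL

open scoped TensorProduct

variable (F : Type) [Field F] [CharZero F] (m n : ℕ)

/-- The base field `F(q)`. -/
abbrev Kq := RatFunc F

/-- The indeterminate `q`. -/
def qq : Kq F := RatFunc.X

/-- `q_i = q` for `i ≤ m` and `q_i = q⁻¹` for `i > m`. -/
def qi (i : ℕ) : Kq F := if i ≤ m then qq F else (qq F)⁻¹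

/-- Generators of the quantum supergroup. -/
inductive Gen (m n : ℕ) : Type
  | E : (i : ℕ) → 1 ≤ i → i < m + n → Gen m n
  | Fg : (i : ℕ) → 1 ≤ i → i < m + n → Gen m n
  | K : (j : ℕ) → 1 ≤ j → j ≤ m + n → Gen m n
  | Kinv : (j : ℕ) → 1 ≤ j → j ≤ m + n → Gen m n

abbrev FA := FreeAlgebra (Kq F) (Gen m n)

def eF (i : ℕ) : FA F m n :=
  if h : 1 ≤ i ∧ i < m + n then FreeAlgebra.ι _ (Gen.E i h.1 h.2) else 0
def fF (i : ℕ) : FA F m n :=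
  if h : 1 ≤ i ∧ i < m + n then FreeAlgebra.ι _ (Gen.Fg i h.1 h.2) else 0
def kF (j : ℕ) : FA F m n :=
  if h : 1 ≤ j ∧ j ≤ m + n then FreeAlgebra.ι _ (Gen.K j h.1 h.2) else 0
def kiF (j : ℕ) : FA F m n :=
  if h : 1 ≤ j ∧ j ≤ m + n then FreeAlgebra.ι _ (Gen.Kinv j h.1 h.2) else 0

/-- Root vectors `E_{i,j}` in the free algebra, via `E_{i,j} = E_{i,j-1}E_{j-1,j} - q_{j-1}⁻¹ E_{j-1,j}E_{i,j-1}`. -/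
def erF (i : ℕ) : ℕ → FA F m n
  | 0 => 0
  | j + 1 =>
    if j = i then eF F m n i
    else erF i j * eF F m n j - (qi F m j)⁻¹ • (eF F m n j * erF i j)

/-- Root vectors `F_{i,j}` in the free algebra, via `F_{i,j} = -q_{j-1} F_{i,j-1}F_{j-1,j} + F_{j-1,j}F_{i,j-1}`. -/
def frF (i : ℕ) : ℕ → FA F m n
  | 0 => 0
  | j + 1 =>
    if j = i then fF F m n i
    else -((qi F m j) • (frF i j * fF F m n j)) + fF F m n j * frF i j

/-- `δ_{ij} - δ_{i,j+1}`. -/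
def dexp (i j : ℕ) : ℤ := (if i = j then 1 else 0) - (if i = j + 1 then 1 else 0)

/-- The defining relations (R1)-(R8) of `U_q(gl(m,n))`. -/
inductive Rel : FA F m n → FA F m n → Prop
  | KK {i j : ℕ} (hi1 : 1 ≤ i) (hi2 : i ≤ m + n) (hj1 : 1 ≤ j) (hj2 : j ≤ m + n) :
      Rel (kF F m n i * kF F m n j) (kF F m n j * kF F m n i)
  | KKinv {i j : ℕ} (hi1 : 1 ≤ i) (hi2 : i ≤ m + n) (hj1 : 1 ≤ j) (hj2 : j ≤ m + n) :
      Rel (kF F m n i * kiF F m n j) (kiF F m n j * kF F m n i)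
  | KinvKinv {i j : ℕ} (hi1 : 1 ≤ i) (hi2 : i ≤ m + n) (hj1 : 1 ≤ j) (hj2 : j ≤ m + n) :
      Rel (kiF F m n i * kiF F m n j) (kiF F m n j * kiF F m n i)
  | Kmul_inv {i : ℕ} (hi1 : 1 ≤ i) (hi2 : i ≤ m + n) :
      Rel (kF F m n i * kiF F m n i) 1
  | Kinv_mul {i : ℕ} (hi1 : 1 ≤ i) (hi2 : i ≤ m + n) :
      Rel (kiF F m n i * kF F m n i) 1
  | KE {i j : ℕ} (hi1 : 1 ≤ i) (hi2 : i ≤ m + n) (hj1 : 1 ≤ j) (hj2 : j < m + n) :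
      Rel (kF F m n i * eF F m n j) ((qi F m i ^ dexp i j) • (eF F m n j * kF F m n i))
  | KF {i j : ℕ} (hi1 : 1 ≤ i) (hi2 : i ≤ m + n) (hj1 : 1 ≤ j) (hj2 : j < m + n) :
      Rel (kF F m n i * fF F m n j) ((qi F m i ^ (-dexp i j)) • (fF F m n j * kF F m n i))
  | KiE {i j : ℕ} (hi1 : 1 ≤ i) (hi2 : i ≤ m + n) (hj1 : 1 ≤ j) (hj2 : j < m + n) :
      Rel (kiF F m n i * eF F m n j) ((qi F m i ^ (-dexp i j)) • (eF F m n j * kiF F m n i))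
  | KiF {i j : ℕ} (hi1 : 1 ≤ i) (hi2 : i ≤ m + n) (hj1 : 1 ≤ j) (hj2 : j < m + n) :
      Rel (kiF F m n i * fF F m n j) ((qi F m i ^ dexp i j) • (fF F m n j * kiF F m n i))
  | EF {i j : ℕ} (hi1 : 1 ≤ i) (hi2 : i < m + n) (hj1 : 1 ≤ j) (hj2 : j < m + n) :
      Rel (eF F m n i * fF F m n j -
            (if i = m ∧ j = m then (-1 : Kq F) else 1) • (fF F m n j * eF F m n i))
          (if i = j then ((qi F m i - (qi F m i)⁻¹)⁻¹) •
              (kF F m n i * kiF F m n (i + 1) - kiF F m n i * kF F m n (i + 1))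
            else 0)
  | Esq : Rel (eF F m n m * eF F m n m) 0
  | Fsq : Rel (fF F m n m * fF F m n m) 0
  | EEfar {i j : ℕ} (hi1 : 1 ≤ i) (hi2 : i < m + n) (hj1 : 1 ≤ j) (hj2 : j < m + n)
      (hfar : i + 1 < j ∨ j + 1 < i) :
      Rel (eF F m n i * eF F m n j) (eF F m n j * eF F m n i)
  | FFfar {i j : ℕ} (hi1 : 1 ≤ i) (hi2 : i < m + n) (hj1 : 1 ≤ j) (hj2 : j < m + n)
      (hfar : i + 1 < j ∨ j + 1 < i) :
      Rel (fF F m n i * fF F m n j) (fF F m n j * fF F m n i)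
  | ESerre {i j : ℕ} (hi1 : 1 ≤ i) (hi2 : i < m + n) (hj1 : 1 ≤ j) (hj2 : j < m + n)
      (hadj : j = i + 1 ∨ i = j + 1) (him : i ≠ m) :
      Rel (eF F m n i * eF F m n i * eF F m n j -
            ((qq F) + (qq F)⁻¹) • (eF F m n i * eF F m n j * eF F m n i) +
            eF F m n j * eF F m n i * eF F m n i) 0
  | FSerre {i j : ℕ} (hi1 : 1 ≤ i) (hi2 : i < m + n) (hj1 : 1 ≤ j) (hj2 : j < m + n)
      (hadj : j = i + 1 ∨ i = j + 1) (him : i ≠ m) :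
      Rel (fF F m n i * fF F m n i * fF F m n j -
            ((qq F) + (qq F)⁻¹) • (fF F m n i * fF F m n j * fF F m n i) +
            fF F m n j * fF F m n i * fF F m n i) 0
  | EEx (hm2 : 2 ≤ m) (hn2 : 2 ≤ n) :
      Rel (erF F m n (m - 1) (m + 2) * eF F m n m + eF F m n m * erF F m n (m - 1) (m + 2)) 0
  | FEx (hm2 : 2 ≤ m) (hn2 : 2 ≤ n) :
      Rel (frF F m n (m - 1) (m + 2) * fF F m n m + fF F m n m * frF F m n (m - 1) (m + 2)) 0

/-- The quantum supergroup `U_q(gl(m,n))`. -/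
abbrev Uq := RingQuot (Rel F m n)

def mkU : FA F m n →ₐ[Kq F] Uq F m n := RingQuot.mkAlgHom _ _

def E (i : ℕ) : Uq F m n := mkU F m n (eF F m n i)
def Fv (i : ℕ) : Uq F m n := mkU F m n (fF F m n i)
def K (j : ℕ) : Uq F m n := mkU F m n (kF F m n j)
def Kinv (j : ℕ) : Uq F m n := mkU F m n (kiF F m n j)
def Er (i j : ℕ) : Uq F m n := mkU F m n (erF F m n i j)
def Fr (i j : ℕ) : Uq F m n := mkU F m n (frF F m n i j)

/-- Membership in `ℐ₀`. -/
def inI0 (p : ℕ × ℕ) : Prop :=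
  (1 ≤ p.1 ∧ p.1 < p.2 ∧ p.2 ≤ m) ∨ (m + 1 ≤ p.1 ∧ p.1 < p.2 ∧ p.2 ≤ m + n)

/-- Membership in `ℐ₁`. -/
def inI1 (p : ℕ × ℕ) : Prop := 1 ≤ p.1 ∧ p.1 ≤ m ∧ m + 1 ≤ p.2 ∧ p.2 ≤ m + n

instance (p : ℕ × ℕ) : Decidable (inI0 m n p) := by unfold inI0; infer_instance
instance (p : ℕ × ℕ) : Decidable (inI1 m n p) := by unfold inI1; infer_instance

/-- All pairs `(i,j)` with `1 ≤ i < j ≤ m+n` in lexicographic order. -/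
def pairList : List (ℕ × ℕ) :=
  (List.range' 1 (m + n)).flatMap fun i => (List.range' (i + 1) (m + n)).map fun j => (i, j)

def I0list : List (ℕ × ℕ) := (pairList m n).filter fun p => decide (inI0 m n p)
def I1list : List (ℕ × ℕ) := (pairList m n).filter fun p => decide (inI1 m n p)

/-- `E₁^d`: ordered monomial in odd root vectors. -/
def E1mon (d : ℕ × ℕ → ℕ) : Uq F m n :=
  ((I1list m n).map fun p => Er F m n p.1 p.2 ^ d p).prod

/-- `E₀^ψ`: ordered monomial in even root vectors. -/
def E0mon (ψ : ℕ × ℕ → ℕ) : Uq F m n :=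
  ((I0list m n).map fun p => Er F m n p.1 p.2 ^ ψ p).prod

/-- `F₁^d = Ω(E₁^d)` (opposite order). -/
def F1mon (d : ℕ × ℕ → ℕ) : Uq F m n :=
  ((I1list m n).reverse.map fun p => Fr F m n p.1 p.2 ^ d p).prod

/-- `F₀^ψ = Ω(E₀^ψ)` (opposite order). -/
def F0mon (ψ : ℕ × ℕ → ℕ) : Uq F m n :=
  ((I0list m n).reverse.map fun p => Fr F m n p.1 p.2 ^ ψ p).prod

/-- `K_μ` for `μ ∈ Λ = ℤ^{m+n}`. -/
def Kmu (μ : Fin (m + n) → ℤ) : Uq F m n :=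
  ((List.finRange (m + n)).map fun j =>
    if 0 ≤ μ j then K F m n (j.1 + 1) ^ (μ j).toNat else Kinv F m n (j.1 + 1) ^ (-(μ j)).toNat).prod

/-- The subalgebra `U_q⁺`. -/
def Uplus : Subalgebra (Kq F) (Uq F m n) :=
  Algebra.adjoin _ {x | ∃ i : ℕ, 1 ≤ i ∧ i < m + n ∧ x = E F m n i}

/-- The subalgebra `U_q⁻`. -/
def Uminus : Subalgebra (Kq F) (Uq F m n) :=
  Algebra.adjoin _ {x | ∃ i : ℕ, 1 ≤ i ∧ i < m + n ∧ x = Fv F m n i}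

/-- The subalgebra `U_q⁰`. -/
def Uzero : Subalgebra (Kq F) (Uq F m n) :=
  Algebra.adjoin _ {x | ∃ j : ℕ, 1 ≤ j ∧ j ≤ m + n ∧ (x = K F m n j ∨ x = Kinv F m n j)}

/-- The even subalgebra `U_q(𝔤₀)`. -/
def Ug0 : Subalgebra (Kq F) (Uq F m n) :=
  Algebra.adjoin _
    ({x | ∃ i : ℕ, 1 ≤ i ∧ i < m + n ∧ i ≠ m ∧ (x = E F m n i ∨ x = Fv F m n i)} ∪
     {x | ∃ j : ℕ, 1 ≤ j ∧ j ≤ m + n ∧ (x = K F m n j ∨ x = Kinv F m n j)})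

/-- The trilinear multiplication map `A ⊗ B ⊗ C → U`. -/
def mulMap3 (A B C : Submodule (Kq F) (Uq F m n)) :
    (A ⊗[Kq F] B) ⊗[Kq F] C →ₗ[Kq F] Uq F m n :=
  TensorProduct.lift
    (((LinearMap.mul (Kq F) (Uq F m n)).comp
        (TensorProduct.lift
          (((LinearMap.mul (Kq F) (Uq F m n)).comp A.subtype).compl₂ B.subtype))).compl₂
      C.subtype)

end QGL

namespace QGL

section SCsec
variable {K : Type*} [CommRing K] {A : Type*} [Ring A] [Algebra K A]

/-- scaled (super) commutation -/
def SC (a b : A) (e : K) : Prop := a * b = e • (b * a)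

namespace SC

theorem of_comm {a b : A} (h : a * b = b * a) : SC a b (1:K) := by
  simpa [SC] using h

theorem mul_right {a b c : A} {e d : K} (h1 : SC a b e) (h2 : SC a c d) :
    SC a (b * c) (e * d) := by
  unfold SC at *
  rw [← mul_assoc, h1, smul_mul_assoc, mul_assoc, h2, mul_smul_comm, smul_smul, mul_assoc]

theorem mul_left {a b c : A} {e d : K} (h1 : SC a c e) (h2 : SC b c d) :
    SC (a * b) c (e * d) := by
  unfold SC at *
  rw [mul_assoc, h2, mul_smul_comm, ← mul_assoc, h1, smul_mul_assoc, smul_smul, mul_assoc,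
    mul_comm e d]

theorem smul_left {a c : A} {e : K} (d : K) (h : SC a c e) : SC (d • a) c e := by
  unfold SC at *
  rw [smul_mul_assoc, h, mul_smul_comm, smul_comm]

theorem smul_right {a c : A} {e : K} (d : K) (h : SC a c e) : SC a (d • c) e := by
  unfold SC at *
  rw [mul_smul_comm, h, smul_mul_assoc, smul_comm]

theorem sub_left {a b c : A} {e : K} (h1 : SC a c e) (h2 : SC b c e) : SC (a - b) c e := by
  unfold SC at *
  rw [sub_mul, h1, h2, mul_sub, smul_sub]

theorem sub_right {a b c : A} {e : K} (h1 : SC a b e) (h2 : SC a c e) : SC a (b - c) e := by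
  unfold SC at *
  rw [mul_sub, h1, h2, sub_mul, smul_sub]

theorem add_right {a b c : A} {e : K} (h1 : SC a b e) (h2 : SC a c e) : SC a (b + c) e := by
  unfold SC at *
  rw [mul_add, h1, h2, add_mul, smul_add]

theorem add_left {a b c : A} {e : K} (h1 : SC a c e) (h2 : SC b c e) : SC (a + b) c e := by
  unfold SC at *
  rw [add_mul, h1, h2, mul_add, smul_add]

theorem neg_right {a b : A} {e : K} (h : SC a b e) : SC a (-b) e := by
  unfold SC at *
  rw [mul_neg, h, neg_mul, smul_neg]

theorem neg_left {a b : A} {e : K} (h : SC a b e) : SC (-a) b e := by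
  unfold SC at *
  rw [neg_mul, h, mul_neg, smul_neg]

theorem comm_of {a b : A} (h : SC a b (1:K)) : a * b = b * a := by
  rw [show a * b = (1:K) • (b * a) from h, one_smul]

end SC
end SCsec

section ALsec
variable {K : Type*} [Field K] {A : Type*} [Ring A] [Algebra K A]

/-- Serre-type relation propagates through the root-vector recursion. -/
theorem AL1 (c a : K) (u v x y : A)
    (hu : u = v * y - a • (y * v))
    (hvx : v * x = x * v)
    (hS : x * (x * y) + y * (x * x) = c • (x * (y * x))) :
    u * (x * x) + x * (x * u) = c • (x * (u * x)) := by
  have hvx' : ∀ z : A, v * (x * z) = x * (v * z) := fun z => by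
    rw [← mul_assoc, hvx, mul_assoc]
  subst hu
  have m2 : (y * v) * (x * x) = y * (x * (x * v)) := by
    rw [mul_assoc, ← mul_assoc v x x, hvx, mul_assoc, hvx]
  have m3 : x * (x * (v * y)) = v * (x * (x * y)) := by
    rw [hvx' (x * y), hvx' y]
  have m5 : x * ((v * y) * x) = v * (x * (y * x)) := by
    rw [hvx' (y * x), mul_assoc v y x]
  have m6 : x * ((y * v) * x) = x * (y * (x * v)) := by
    rw [mul_assoc y v x, hvx]
  have hA : v * (x * (x * y)) + v * (y * (x * x)) = c • (v * (x * (y * x))) := by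
    rw [← mul_add, hS, mul_smul_comm]
  have hB : x * (x * (y * v)) + y * (x * (x * v)) = c • (x * (y * (x * v))) := by
    have h := congrArg (· * v) hS
    simpa [mul_assoc, add_mul, smul_mul_assoc] using h
  simp only [sub_mul, mul_sub, smul_mul_assoc, mul_smul_comm, smul_sub, smul_smul]
  rw [mul_assoc v y (x * x), m2, m3, m6, m5, ← hA, mul_comm c a, mul_smul, ← hB]
  module

/-- linearity of the Serre-type relation in `u`. -/
theorem AL1smul (c : K) (d : K) (u x : A)
    (h : u * (x * x) + x * (x * u) = c • (x * (u * x))) :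
    (d • u) * (x * x) + x * (x * (d • u)) = c • (x * ((d • u) * x)) := by
  simp only [smul_mul_assoc, mul_smul_comm, ← smul_add, h, smul_comm c d]

/-- The key (generic) super-commutation computation. -/
theorem AL2 (Q : K) (hQ : Q ≠ 0) (hc : Q + Q⁻¹ ≠ 0) (u x y : A)
    (h1 : u * y = y * u)
    (hxy : x * (x * y) + y * (x * x) = (Q + Q⁻¹) • (x * (y * x)))
    (hux : u * (x * x) + x * (x * u) = (Q + Q⁻¹) • (x * (u * x))) :
    ((u * x - Q⁻¹ • (x * u)) * y - Q⁻¹ • (y * (u * x - Q⁻¹ • (x * u)))) * x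
      = x * ((u * x - Q⁻¹ • (x * u)) * y - Q⁻¹ • (y * (u * x - Q⁻¹ • (x * u)))) := by
  have huy' : ∀ z : A, u * (y * z) = y * (u * z) := fun z => by
    rw [← mul_assoc, h1, mul_assoc]
  have rxy : x * (y * x) = (Q + Q⁻¹)⁻¹ • (x * (x * y) + y * (x * x)) := by
    rw [hxy, inv_smul_smul₀ hc]
  have rux : x * (u * x) = (Q + Q⁻¹)⁻¹ • (u * (x * x) + x * (x * u)) := by
    rw [hux, inv_smul_smul₀ hc]
  have rxy' : ∀ z : A, x * (y * (x * z))
      = (Q + Q⁻¹)⁻¹ • (x * (x * (y * z)) + y * (x * (x * z))) := fun z => by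
    have h := congrArg (· * z) rxy
    simpa [mul_assoc, add_mul, smul_mul_assoc] using h
  have rux' : ∀ z : A, x * (u * (x * z))
      = (Q + Q⁻¹)⁻¹ • (u * (x * (x * z)) + x * (x * (u * z))) := fun z => by
    have h := congrArg (· * z) rux
    simpa [mul_assoc, add_mul, smul_mul_assoc] using h
  simp only [mul_assoc, sub_mul, mul_sub, smul_mul_assoc, mul_smul_comm, smul_sub, smul_smul,
    smul_add, mul_add, h1, huy', rxy, rux, rxy', rux']
  have h2 : (1 : K) + Q ^ 2 ≠ 0 := by
    intro h
    apply hc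
    have hq : Q + Q⁻¹ = (1 + Q ^ 2) / Q := by field_simp; ring
    rw [hq, h, zero_div]
  have hr : Q + Q⁻¹ = (1 + Q ^ 2) * Q⁻¹ := by field_simp; ring
  match_scalars
  all_goals try ring
  all_goals rw [hr, mul_inv, inv_inv]
  all_goals field_simp
  all_goals ring

/-- splitting-step rearrangement (E-side). -/
theorem AL3 (b g : K) (a b' t : A) (hcomm : t * a = a * t) :
    (a * b' - g • (b' * a)) * t - b • (t * (a * b' - g • (b' * a)))
      = a * (b' * t - b • (t * b')) - g • ((b' * t - b • (t * b')) * a) := by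
  have hcomm' : ∀ z : A, a * (t * z) = t * (a * z) := fun z => by
    rw [← mul_assoc, ← hcomm, mul_assoc]
  simp only [sub_mul, mul_sub, smul_mul_assoc, mul_smul_comm, smul_sub, smul_smul, mul_assoc,
    ← hcomm, hcomm']
  module

/-- splitting-step rearrangement (F-side). -/
theorem AL3F (b g : K) (a b' f : A) (hcomm : f * a = a * f) :
    -(b • ((-(g • (a * b')) + b' * a) * f)) + f * (-(g • (a * b')) + b' * a)
      = -(g • (a * (-(b • (b' * f)) + f * b'))) + (-(b • (b' * f)) + f * b') * a := by
  have hcomm' : ∀ z : A, f * (a * z) = a * (f * z) := fun z => by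
    rw [← mul_assoc, hcomm, mul_assoc]
  simp only [neg_mul, mul_neg, add_mul, mul_add, smul_mul_assoc, mul_smul_comm, smul_add,
    smul_neg, smul_smul, mul_assoc, hcomm, hcomm']
  module

/-- rescaling of the `F`-recursion into `E`-shape. -/
theorem AL4 (Q : K) (hQ : Q ≠ 0) (v y : A) :
    -(Q • (v * y)) + y * v = (-Q) • (v * y - Q⁻¹ • (y * v)) := by
  match_scalars
  all_goals try ring
  all_goals try field_simp
  all_goals try ring

/-- rescaling of the two-step `F`-recursion. -/
theorem AL5 (Q : K) (hQ : Q ≠ 0) (V y : A) :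
    -(Q • (((-Q) • V) * y)) + y * ((-Q) • V) = (Q ^ 2) • (V * y - Q⁻¹ • (y * V)) := by
  rw [smul_mul_assoc, mul_smul_comm]
  match_scalars
  all_goals try ring
  all_goals try field_simp
  all_goals try ring

end ALsec

section Aux
variable (F : Type) [Field F] [CharZero F] (m n : ℕ)

theorem qq_ne_zero : qq F ≠ 0 := RatFunc.X_ne_zero

theorem qi_ne_zero (a : ℕ) : qi F m a ≠ 0 := by
  unfold qi
  split
  · exact RatFunc.X_ne_zero
  · exact inv_ne_zero RatFunc.X_ne_zero

theorem qi_add_inv (a : ℕ) : qi F m a + (qi F m a)⁻¹ = qq F + (qq F)⁻¹ := by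
  unfold qi
  split
  · rfl
  · rw [inv_inv, add_comm]

theorem qi_succ (a : ℕ) (h : a ≠ m) : qi F m (a + 1) = qi F m a := by
  unfold qi
  rcases Nat.lt_or_ge a m with h' | h'
  · rw [if_pos (by omega), if_pos (by omega)]
  · rw [if_neg (by omega), if_neg (by omega)]

theorem qsum_ne_zero : qq F + (qq F)⁻¹ ≠ 0 := by
  intro h
  have hx : qq F ≠ 0 := qq_ne_zero F
  have h2 : (1 : Kq F) = -(qq F * qq F) := by
    calc (1 : Kq F) = qq F * (qq F)⁻¹ := (mul_inv_cancel₀ hx).symm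
    _ = qq F * (-qq F) := by rw [eq_neg_of_add_eq_zero_right h]
    _ = -(qq F * qq F) := by ring
  have h3 : (Polynomial.X ^ 2 + 1 : Polynomial F) ≠ 0 := by
    intro hh
    have hco := congrArg (fun p => Polynomial.coeff p 0) hh
    simp [Polynomial.coeff_X_pow] at hco
  apply RatFunc.algebraMap_ne_zero h3
  rw [map_add, map_pow, map_one]
  have hX : algebraMap (Polynomial F) (RatFunc F) Polynomial.X = qq F := by
    rw [RatFunc.algebraMap_X]; rfl
  rw [hX, sq, show (1 : Kq F) = -(qq F * qq F) from h2]
  ring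

theorem mk_rel {a b : FA F m n} (h : Rel F m n a b) : mkU F m n a = mkU F m n b :=
  RingQuot.mkAlgHom_rel _ h

theorem E_mk (i : ℕ) : mkU F m n (eF F m n i) = E F m n i := rfl
theorem F_mk (i : ℕ) : mkU F m n (fF F m n i) = Fv F m n i := rfl
theorem Er_mk (i j : ℕ) : mkU F m n (erF F m n i j) = Er F m n i j := rfl
theorem Fr_mk (i j : ℕ) : mkU F m n (frF F m n i j) = Fr F m n i j := rfl

theorem er_base (i : ℕ) : Er F m n i (i + 1) = E F m n i := by
  unfold Er E
  rw [erF, if_pos rfl]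

theorem er_succ (i j : ℕ) (h : i < j) :
    Er F m n i (j + 1)
      = Er F m n i j * E F m n j - (qi F m j)⁻¹ • (E F m n j * Er F m n i j) := by
  unfold Er E
  rw [erF, if_neg (Nat.ne_of_gt h), map_sub, map_smul, map_mul, map_mul]

theorem fr_base (i : ℕ) : Fr F m n i (i + 1) = Fv F m n i := by
  unfold Fr Fv
  rw [frF, if_pos rfl]

theorem fr_succ (i j : ℕ) (h : i < j) :
    Fr F m n i (j + 1)
      = -(qi F m j • (Fr F m n i j * Fv F m n j)) + Fv F m n j * Fr F m n i j := by
  unfold Fr Fv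
  rw [frF, if_neg (Nat.ne_of_gt h), map_add, map_neg, map_smul, map_mul, map_mul]

theorem Efar {i j : ℕ} (hi1 : 1 ≤ i) (hi2 : i < m + n) (hj1 : 1 ≤ j) (hj2 : j < m + n)
    (h : i + 1 < j ∨ j + 1 < i) : E F m n i * E F m n j = E F m n j * E F m n i := by
  have h0 := mk_rel F m n (Rel.EEfar hi1 hi2 hj1 hj2 h)
  simp only [map_mul, E_mk] at h0
  exact h0

theorem Ffar {i j : ℕ} (hi1 : 1 ≤ i) (hi2 : i < m + n) (hj1 : 1 ≤ j) (hj2 : j < m + n)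
    (h : i + 1 < j ∨ j + 1 < i) : Fv F m n i * Fv F m n j = Fv F m n j * Fv F m n i := by
  have h0 := mk_rel F m n (Rel.FFfar hi1 hi2 hj1 hj2 h)
  simp only [map_mul, F_mk] at h0
  exact h0

theorem Eserre {i j : ℕ} (hi1 : 1 ≤ i) (hi2 : i < m + n) (hj1 : 1 ≤ j) (hj2 : j < m + n)
    (hadj : j = i + 1 ∨ i = j + 1) (him : i ≠ m) :
    E F m n i * (E F m n i * E F m n j) + E F m n j * (E F m n i * E F m n i)
      = (qq F + (qq F)⁻¹) • (E F m n i * (E F m n j * E F m n i)) := by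
  have h0 := mk_rel F m n (Rel.ESerre hi1 hi2 hj1 hj2 hadj him)
  simp only [map_add, map_sub, map_smul, map_mul, map_zero, E_mk, mul_assoc] at h0
  have h1 : E F m n i * (E F m n i * E F m n j) + E F m n j * (E F m n i * E F m n i)
      - (qq F + (qq F)⁻¹) • (E F m n i * (E F m n j * E F m n i)) = 0 := by
    rw [← h0, sub_add_eq_add_sub]
  exact sub_eq_zero.mp h1

theorem Fserre {i j : ℕ} (hi1 : 1 ≤ i) (hi2 : i < m + n) (hj1 : 1 ≤ j) (hj2 : j < m + n)
    (hadj : j = i + 1 ∨ i = j + 1) (him : i ≠ m) :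
    Fv F m n i * (Fv F m n i * Fv F m n j) + Fv F m n j * (Fv F m n i * Fv F m n i)
      = (qq F + (qq F)⁻¹) • (Fv F m n i * (Fv F m n j * Fv F m n i)) := by
  have h0 := mk_rel F m n (Rel.FSerre hi1 hi2 hj1 hj2 hadj him)
  simp only [map_add, map_sub, map_smul, map_mul, map_zero, F_mk, mul_assoc] at h0
  have h1 : Fv F m n i * (Fv F m n i * Fv F m n j) + Fv F m n j * (Fv F m n i * Fv F m n i)
      - (qq F + (qq F)⁻¹) • (Fv F m n i * (Fv F m n j * Fv F m n i)) = 0 := by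
    rw [← h0, sub_add_eq_add_sub]
  exact sub_eq_zero.mp h1

theorem Er8 (hm2 : 2 ≤ m) (hn2 : 2 ≤ n) :
    Er F m n (m - 1) (m + 2) * E F m n m
      = (-1 : Kq F) • (E F m n m * Er F m n (m - 1) (m + 2)) := by
  have h0 := mk_rel F m n (Rel.EEx hm2 hn2)
  simp only [map_add, map_mul, map_zero, E_mk, Er_mk] at h0
  rw [eq_neg_of_add_eq_zero_left h0]
  exact (neg_one_smul (Kq F) _).symm

theorem Fr8 (hm2 : 2 ≤ m) (hn2 : 2 ≤ n) :
    Fr F m n (m - 1) (m + 2) * Fv F m n m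
      = (-1 : Kq F) • (Fv F m n m * Fr F m n (m - 1) (m + 2)) := by
  have h0 := mk_rel F m n (Rel.FEx hm2 hn2)
  simp only [map_add, map_mul, map_zero, F_mk, Fr_mk] at h0
  rw [eq_neg_of_add_eq_zero_left h0]
  exact (neg_one_smul (Kq F) _).symm

theorem Efar_er (s k : ℕ) (hs : 1 ≤ s) (hk1 : 1 ≤ k) (hk2 : k < m + n) :
    ∀ t, s + 1 ≤ t → t ≤ m + n → (k + 1 < s ∨ t < k) →
      E F m n k * Er F m n s t = Er F m n s t * E F m n k := by
  refine Nat.le_induction ?_ ?_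
  · intro ht hfar
    rw [er_base]
    exact Efar F m n hk1 hk2 hs (by omega) (by omega)
  · intro t hst IH ht1 hfar
    have hcomm1 : E F m n k * E F m n t = E F m n t * E F m n k :=
      Efar F m n hk1 hk2 (by omega) (by omega) (by omega)
    have hcomm2 : E F m n k * Er F m n s t = Er F m n s t * E F m n k :=
      IH (by omega) (by omega)
    rw [er_succ F m n s t (by omega)]
    have t1 := SC.mul_right (SC.of_comm (K := Kq F) hcomm2) (SC.of_comm hcomm1)
    have t2 := SC.mul_right (SC.of_comm (K := Kq F) hcomm1) (SC.of_comm hcomm2)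
    rw [one_mul] at t1 t2
    exact SC.comm_of (SC.sub_right t1 (SC.smul_right _ t2))

theorem Ffar_fr (s k : ℕ) (hs : 1 ≤ s) (hk1 : 1 ≤ k) (hk2 : k < m + n) :
    ∀ t, s + 1 ≤ t → t ≤ m + n → (k + 1 < s ∨ t < k) →
      Fv F m n k * Fr F m n s t = Fr F m n s t * Fv F m n k := by
  refine Nat.le_induction ?_ ?_
  · intro ht hfar
    rw [fr_base]
    exact Ffar F m n hk1 hk2 hs (by omega) (by omega)
  · intro t hst IH ht1 hfar
    have hcomm1 : Fv F m n k * Fv F m n t = Fv F m n t * Fv F m n k :=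
      Ffar F m n hk1 hk2 (by omega) (by omega) (by omega)
    have hcomm2 : Fv F m n k * Fr F m n s t = Fr F m n s t * Fv F m n k :=
      IH (by omega) (by omega)
    rw [fr_succ F m n s t (by omega)]
    have t1 := SC.mul_right (SC.of_comm (K := Kq F) hcomm2) (SC.of_comm hcomm1)
    have t2 := SC.mul_right (SC.of_comm (K := Kq F) hcomm1) (SC.of_comm hcomm2)
    rw [one_mul] at t1 t2
    exact SC.comm_of (SC.add_right (SC.neg_right (SC.smul_right _ t1)) t2)

theorem er_split (i c : ℕ) (h1 : 1 ≤ i) (hic : i < c) :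
    ∀ j, c + 1 ≤ j → j ≤ m + n →
      Er F m n i j = Er F m n i c * Er F m n c j
        - (qi F m c)⁻¹ • (Er F m n c j * Er F m n i c) := by
  refine Nat.le_induction ?_ ?_
  · intro hj
    rw [er_base, er_succ F m n i c hic]
  · intro j hcj IH hj1
    have hcomm : E F m n j * Er F m n i c = Er F m n i c * E F m n j :=
      Efar_er F m n i j h1 (by omega) (by omega) c (by omega) (by omega) (by omega)
    have hcomm' : ∀ z : Uq F m n,
        Er F m n i c * (E F m n j * z) = E F m n j * (Er F m n i c * z) := fun z => by
      rw [← mul_assoc, ← hcomm, mul_assoc]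
    rw [er_succ F m n i j (by omega), er_succ F m n c j (by omega), IH (by omega)]
    exact AL3 _ _ _ _ _ hcomm

theorem fr_split (i c : ℕ) (h1 : 1 ≤ i) (hic : i < c) :
    ∀ j, c + 1 ≤ j → j ≤ m + n →
      Fr F m n i j = -(qi F m c • (Fr F m n i c * Fr F m n c j))
        + Fr F m n c j * Fr F m n i c := by
  refine Nat.le_induction ?_ ?_
  · intro hj
    rw [fr_base, fr_succ F m n i c hic]
  · intro j hcj IH hj1
    have hcomm : Fv F m n j * Fr F m n i c = Fr F m n i c * Fv F m n j :=
      Ffar_fr F m n i j h1 (by omega) (by omega) c (by omega) (by omega) (by omega)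
    have hcomm' : ∀ z : Uq F m n,
        Fv F m n j * (Fr F m n i c * z) = Fr F m n i c * (Fv F m n j * z) := fun z => by
      rw [← mul_assoc, hcomm, mul_assoc]
    rw [fr_succ F m n i j (by omega), fr_succ F m n c j (by omega), IH (by omega)]
    exact AL3F _ _ _ _ _ hcomm

theorem Eser_u (i a : ℕ) (h1 : 1 ≤ i) (hia : i < a) (ham : a ≠ m) (ha2 : a < m + n) :
    Er F m n i a * (E F m n a * E F m n a) + E F m n a * (E F m n a * Er F m n i a)
      = (qq F + (qq F)⁻¹) • (E F m n a * (Er F m n i a * E F m n a)) := by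
  by_cases hbase : a = i + 1
  · subst hbase
    rw [er_base, add_comm]
    exact Eserre F m n (by omega) (by omega) h1 (by omega) (Or.inr rfl) ham
  · have hstep : i + 1 < a := by omega
    obtain ⟨b, rfl⟩ : ∃ b, a = b + 1 := ⟨a - 1, by omega⟩
    refine AL1 (qq F + (qq F)⁻¹) (qi F m b)⁻¹ _ (Er F m n i b) (E F m n (b + 1)) (E F m n b)
      (er_succ F m n i b (by omega)) ?_ ?_
    · exact (Efar_er F m n i (b + 1) h1 (by omega) (by omega) b (by omega) (by omega)
        (by omega)).symm
    · exact Eserre F m n (by omega) (by omega) (by omega) (by omega) (Or.inr rfl) ham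

theorem Fser_u (i a : ℕ) (h1 : 1 ≤ i) (hia : i < a) (ham : a ≠ m) (ha2 : a < m + n) :
    Fr F m n i a * (Fv F m n a * Fv F m n a) + Fv F m n a * (Fv F m n a * Fr F m n i a)
      = (qq F + (qq F)⁻¹) • (Fv F m n a * (Fr F m n i a * Fv F m n a)) := by
  by_cases hbase : a = i + 1
  · subst hbase
    rw [fr_base, add_comm]
    exact Fserre F m n (by omega) (by omega) h1 (by omega) (Or.inr rfl) ham
  · have hstep : i + 1 < a := by omega
    obtain ⟨b, rfl⟩ : ∃ b, a = b + 1 := ⟨a - 1, by omega⟩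
    have hvx : Fr F m n i b * Fv F m n (b + 1) = Fv F m n (b + 1) * Fr F m n i b :=
      (Ffar_fr F m n i (b + 1) h1 (by omega) (by omega) b (by omega) (by omega)
        (by omega)).symm
    have hS := Fserre F m n (i := b + 1) (j := b) (by omega) (by omega) (by omega) (by omega)
      (Or.inr rfl) ham
    have hu' : Fr F m n i (b + 1) = (-(qi F m b)) •
        (Fr F m n i b * Fv F m n b - (qi F m b)⁻¹ • (Fv F m n b * Fr F m n i b)) := by
      rw [fr_succ F m n i b (by omega)]
      exact AL4 _ (qi_ne_zero F m b) _ _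
    have h' := AL1 (qq F + (qq F)⁻¹) (qi F m b)⁻¹
      (Fr F m n i b * Fv F m n b - (qi F m b)⁻¹ • (Fv F m n b * Fr F m n i b))
      (Fr F m n i b) (Fv F m n (b + 1)) (Fv F m n b) rfl hvx hS
    have h'' := AL1smul (qq F + (qq F)⁻¹) (-(qi F m b)) _ (Fv F m n (b + 1)) h'
    rwa [← hu'] at h''

theorem comm_e (i k : ℕ) (h1 : 1 ≤ i) (hik : i < k) :
    ∀ j, k + 2 ≤ j → j ≤ m + n →
      Er F m n i j * E F m n k
        = (if k = m then (-1 : Kq F) else 1) • (E F m n k * Er F m n i j) := by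
  refine Nat.le_induction ?_ ?_
  · intro hj
    by_cases hkm : k = m
    · replace hkm : m = k := hkm.symm
      subst hkm
      have hm2 : 2 ≤ m := by omega
      have hn2 : 2 ≤ n := by omega
      rw [if_pos rfl]
      by_cases him : i = m - 1
      · rw [him]
        exact Er8 F m n hm2 hn2
      · have hi' : i < m - 1 := by omega
        rw [er_split F m n i (m - 1) h1 hi' (m + 2) (by omega) (by omega)]
        have hfar : E F m n m * Er F m n i (m - 1) = Er F m n i (m - 1) * E F m n m :=
          Efar_er F m n i m h1 (by omega) (by omega) (m - 1) (by omega) (by omega) (by omega)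
        have sA : SC (Er F m n i (m - 1)) (E F m n m) (1 : Kq F) := SC.of_comm hfar.symm
        have sB : SC (Er F m n (m - 1) (m + 2)) (E F m n m) (-1 : Kq F) := Er8 F m n hm2 hn2
        have t1 := SC.mul_left sA sB
        have t2 := SC.mul_left sB sA
        rw [one_mul] at t1
        rw [mul_one] at t2
        exact SC.sub_left t1 (SC.smul_left _ t2)
    · rw [if_neg hkm, one_smul]
      have hQ := qi_ne_zero F m k
      have hcne : qi F m k + (qi F m k)⁻¹ ≠ 0 := by
        rw [qi_add_inv]; exact qsum_ne_zero F
      have hxy : E F m n k * (E F m n k * E F m n (k + 1))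
          + E F m n (k + 1) * (E F m n k * E F m n k)
          = (qi F m k + (qi F m k)⁻¹) • (E F m n k * (E F m n (k + 1) * E F m n k)) := by
        rw [qi_add_inv]
        exact Eserre F m n (by omega) (by omega) (by omega) (by omega) (Or.inl rfl) hkm
      have hux : Er F m n i k * (E F m n k * E F m n k)
          + E F m n k * (E F m n k * Er F m n i k)
          = (qi F m k + (qi F m k)⁻¹) • (E F m n k * (Er F m n i k * E F m n k)) := by
        rw [qi_add_inv]
        exact Eser_u F m n i k h1 hik hkm (by omega)
      have h1' : Er F m n i k * E F m n (k + 1) = E F m n (k + 1) * Er F m n i k :=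
        (Efar_er F m n i (k + 1) h1 (by omega) (by omega) k (by omega) (by omega)
          (by omega)).symm
      have key := AL2 (qi F m k) hQ hcne (Er F m n i k) (E F m n k) (E F m n (k + 1))
        h1' hxy hux
      have e2 : Er F m n i (k + 2) = Er F m n i (k + 1) * E F m n (k + 1)
          - (qi F m k)⁻¹ • (E F m n (k + 1) * Er F m n i (k + 1)) := by
        rw [show k + 2 = (k + 1) + 1 from rfl, er_succ F m n i (k + 1) (by omega),
          qi_succ F m k hkm]
      rw [e2, er_succ F m n i k hik]
      exact key
  · intro j hj IH hj1
    have hIH : SC (Er F m n i j) (E F m n k) (if k = m then (-1 : Kq F) else 1) :=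
      IH (by omega)
    have hEj : SC (E F m n j) (E F m n k) (1 : Kq F) :=
      SC.of_comm (Efar F m n (by omega) (by omega) (by omega) (by omega) (Or.inr (by omega)))
    have t1 := SC.mul_left hIH hEj
    have t2 := SC.mul_left hEj hIH
    rw [mul_one] at t1
    rw [one_mul] at t2
    rw [er_succ F m n i j (by omega)]
    exact SC.sub_left t1 (SC.smul_left _ t2)

theorem comm_f (i k : ℕ) (h1 : 1 ≤ i) (hik : i < k) :
    ∀ j, k + 2 ≤ j → j ≤ m + n →
      Fr F m n i j * Fv F m n k
        = (if k = m then (-1 : Kq F) else 1) • (Fv F m n k * Fr F m n i j) := by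
  refine Nat.le_induction ?_ ?_
  · intro hj
    by_cases hkm : k = m
    · replace hkm : m = k := hkm.symm
      subst hkm
      have hm2 : 2 ≤ m := by omega
      have hn2 : 2 ≤ n := by omega
      rw [if_pos rfl]
      by_cases him : i = m - 1
      · rw [him]
        exact Fr8 F m n hm2 hn2
      · have hi' : i < m - 1 := by omega
        rw [fr_split F m n i (m - 1) h1 hi' (m + 2) (by omega) (by omega)]
        have hfar : Fv F m n m * Fr F m n i (m - 1) = Fr F m n i (m - 1) * Fv F m n m :=
          Ffar_fr F m n i m h1 (by omega) (by omega) (m - 1) (by omega) (by omega) (by omega)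
        have sA : SC (Fr F m n i (m - 1)) (Fv F m n m) (1 : Kq F) := SC.of_comm hfar.symm
        have sB : SC (Fr F m n (m - 1) (m + 2)) (Fv F m n m) (-1 : Kq F) := Fr8 F m n hm2 hn2
        have t1 := SC.mul_left sA sB
        have t2 := SC.mul_left sB sA
        rw [one_mul] at t1
        rw [mul_one] at t2
        exact SC.add_left (SC.neg_left (SC.smul_left _ t1)) t2
    · rw [if_neg hkm, one_smul]
      have hQ := qi_ne_zero F m k
      have hcne : qi F m k + (qi F m k)⁻¹ ≠ 0 := by
        rw [qi_add_inv]; exact qsum_ne_zero F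
      have hxy : Fv F m n k * (Fv F m n k * Fv F m n (k + 1))
          + Fv F m n (k + 1) * (Fv F m n k * Fv F m n k)
          = (qi F m k + (qi F m k)⁻¹) • (Fv F m n k * (Fv F m n (k + 1) * Fv F m n k)) := by
        rw [qi_add_inv]
        exact Fserre F m n (by omega) (by omega) (by omega) (by omega) (Or.inl rfl) hkm
      have hux : Fr F m n i k * (Fv F m n k * Fv F m n k)
          + Fv F m n k * (Fv F m n k * Fr F m n i k)
          = (qi F m k + (qi F m k)⁻¹) • (Fv F m n k * (Fr F m n i k * Fv F m n k)) := by
        rw [qi_add_inv]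
        exact Fser_u F m n i k h1 hik hkm (by omega)
      have h1' : Fr F m n i k * Fv F m n (k + 1) = Fv F m n (k + 1) * Fr F m n i k :=
        (Ffar_fr F m n i (k + 1) h1 (by omega) (by omega) k (by omega) (by omega)
          (by omega)).symm
      have key := AL2 (qi F m k) hQ hcne (Fr F m n i k) (Fv F m n k) (Fv F m n (k + 1))
        h1' hxy hux
      have g1 : Fr F m n i (k + 1) = (-(qi F m k)) •
          (Fr F m n i k * Fv F m n k - (qi F m k)⁻¹ • (Fv F m n k * Fr F m n i k)) := by
        rw [fr_succ F m n i k hik]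
        exact AL4 _ hQ _ _
      have g2 : Fr F m n i (k + 2) = ((qi F m k) ^ 2) •
          ((Fr F m n i k * Fv F m n k - (qi F m k)⁻¹ • (Fv F m n k * Fr F m n i k))
              * Fv F m n (k + 1)
            - (qi F m k)⁻¹ • (Fv F m n (k + 1) *
              (Fr F m n i k * Fv F m n k - (qi F m k)⁻¹ • (Fv F m n k * Fr F m n i k)))) := by
        rw [show k + 2 = (k + 1) + 1 from rfl, fr_succ F m n i (k + 1) (by omega),
          qi_succ F m k hkm, g1]
        exact AL5 _ hQ _ _
      rw [g2, smul_mul_assoc, key, mul_smul_comm]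
  · intro j hj IH hj1
    have hIH : SC (Fr F m n i j) (Fv F m n k) (if k = m then (-1 : Kq F) else 1) :=
      IH (by omega)
    have hFj : SC (Fv F m n j) (Fv F m n k) (1 : Kq F) :=
      SC.of_comm (Ffar F m n (by omega) (by omega) (by omega) (by omega) (Or.inr (by omega)))
    have t1 := SC.mul_left hIH hFj
    have t2 := SC.mul_left hFj hIH
    rw [mul_one] at t1
    rw [one_mul] at t2
    rw [fr_succ F m n i j (by omega)]
    exact SC.add_left (SC.neg_left (SC.smul_left _ t1)) t2

theorem er_er (i s j : ℕ) (h1 : 1 ≤ i) (his : i < s) (hj : j ≤ m + n) :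
    ∀ t, s + 1 ≤ t → t < j →
      Er F m n i j * Er F m n s t
        = (if s ≤ m ∧ m < t then (-1 : Kq F) else 1) • (Er F m n s t * Er F m n i j) := by
  refine Nat.le_induction ?_ ?_
  · intro htj
    rw [er_base, if_congr (show (s ≤ m ∧ m < s + 1) ↔ s = m by omega) rfl rfl]
    exact comm_e F m n i s h1 his j (by omega) hj
  · intro t ht IH htj
    have sIH : SC (Er F m n i j) (Er F m n s t)
        (if s ≤ m ∧ m < t then (-1 : Kq F) else 1) := IH (by omega)
    have sce : SC (Er F m n i j) (E F m n t) (if t = m then (-1 : Kq F) else 1) :=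
      comm_e F m n i t h1 (by omega) j (by omega) hj
    have hsign : (if s ≤ m ∧ m < t then (-1 : Kq F) else 1)
          * (if t = m then (-1 : Kq F) else 1)
        = (if s ≤ m ∧ m < t + 1 then (-1 : Kq F) else 1) := by
      by_cases htm : t = m
      · rw [if_pos htm, if_neg (by omega), if_pos (by omega)]
        norm_num
      · rw [if_neg htm, mul_one,
          if_congr (show (s ≤ m ∧ m < t) ↔ (s ≤ m ∧ m < t + 1) by omega) rfl rfl]
    have t1 := SC.mul_right sIH sce
    have t2 := SC.mul_right sce sIH
    rw [hsign] at t1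
    rw [mul_comm, hsign] at t2
    rw [er_succ F m n s t (by omega)]
    exact SC.sub_right t1 (SC.smul_right _ t2)

theorem fr_fr (i s j : ℕ) (h1 : 1 ≤ i) (his : i < s) (hj : j ≤ m + n) :
    ∀ t, s + 1 ≤ t → t < j →
      Fr F m n i j * Fr F m n s t
        = (if s ≤ m ∧ m < t then (-1 : Kq F) else 1) • (Fr F m n s t * Fr F m n i j) := by
  refine Nat.le_induction ?_ ?_
  · intro htj
    rw [fr_base, if_congr (show (s ≤ m ∧ m < s + 1) ↔ s = m by omega) rfl rfl]
    exact comm_f F m n i s h1 his j (by omega) hj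
  · intro t ht IH htj
    have sIH : SC (Fr F m n i j) (Fr F m n s t)
        (if s ≤ m ∧ m < t then (-1 : Kq F) else 1) := IH (by omega)
    have sce : SC (Fr F m n i j) (Fv F m n t) (if t = m then (-1 : Kq F) else 1) :=
      comm_f F m n i t h1 (by omega) j (by omega) hj
    have hsign : (if s ≤ m ∧ m < t then (-1 : Kq F) else 1)
          * (if t = m then (-1 : Kq F) else 1)
        = (if s ≤ m ∧ m < t + 1 then (-1 : Kq F) else 1) := by
      by_cases htm : t = m
      · rw [if_pos htm, if_neg (by omega), if_pos (by omega)]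
        norm_num
      · rw [if_neg htm, mul_one,
          if_congr (show (s ≤ m ∧ m < t) ↔ (s ≤ m ∧ m < t + 1) by omega) rfl rfl]
    have t1 := SC.mul_right sIH sce
    have t2 := SC.mul_right sce sIH
    rw [hsign] at t1
    rw [mul_comm, hsign] at t2
    rw [fr_succ F m n s t (by omega)]
    exact SC.add_right (SC.neg_right (SC.smul_right _ t1)) t2

end Aux

end QGL

namespace QGL

/-- In `U_q(gl(m,n))`, for `i < s < t < j` one has `[E_{i,j}, E_{s,t}] = 0`
and `[F_{i,j}, F_{s,t}] = 0` (super-commutators), i.e. the elements commute up to the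
Koszul sign determined by their parities. -/
theorem root_vectors_supercommute (F : Type) [Field F] [CharZero F] (m n : ℕ)
    (hm : 1 ≤ m) (hn : 1 ≤ n)
    (i s t j : ℕ) (h1 : 1 ≤ i) (h2 : i < s) (h3 : s < t) (h4 : t < j) (h5 : j ≤ m + n) :
    Er F m n i j * Er F m n s t =
      (if (i ≤ m ∧ m < j) ∧ (s ≤ m ∧ m < t) then (-1 : Kq F) else 1) •
        (Er F m n s t * Er F m n i j) ∧
    Fr F m n i j * Fr F m n s t =
      (if (i ≤ m ∧ m < j) ∧ (s ≤ m ∧ m < t) then (-1 : Kq F) else 1) •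
        (Fr F m n s t * Fr F m n i j) := by
  refine ⟨?_, ?_⟩
  · rw [if_congr (show ((i ≤ m ∧ m < j) ∧ (s ≤ m ∧ m < t)) ↔ (s ≤ m ∧ m < t) by omega) rfl rfl]
    exact er_er F m n i s j h1 h2 h5 t (by omega) h4
  · rw [if_congr (show ((i ≤ m ∧ m < j) ∧ (s ≤ m ∧ m < t)) ↔ (s ≤ m ∧ m < t) by omega) rfl rfl]
    exact fr_fr F m n i s j h1 h2 h5 t (by omega) h4

end QGL
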